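/- Let 𝔽 be a field, let m be a positive integer, and let M : [m] × [m] × [m] → 𝔽 be a three-dimensional matrix. Let M₁ be the m × m² matrix with entries M₁[x,(y,z)] = M[x,y,z] and let M₂ be the m × m² matrix with entries M₂[y,(x,z)] = M[x,y,z]. If the matrix rank of M₁ is at most r₁ and the matrix rank of M₂ is at most r₂, then M has tensor rank at most r₁·r₂; that is, there exist vectors v_p, u_p, w_p ∈ 𝔽^m for p ∈ [r₁·r₂] such that M[x,y,z] = Σ_{p=1}^{r₁ r₂} v_p[x]·u_p[y]·w_p[z] for all x, y, z ∈ [m]. -/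

import Mathlib

open Module Submodule

/-- If the span of a finite family has finrank at most `r`, the family can be
written as combinations of `r` vectors lying in the span. -/
lemma aux_span_decomp {𝔽 : Type*} [Field 𝔽] {W : Type*} [AddCommGroup W] [Module 𝔽 W]
    {n : Type*} [Fintype n] (f : n → W) (r : ℕ)
    (h : Module.finrank 𝔽 (Submodule.span 𝔽 (Set.range f)) ≤ r) :
    ∃ (a : n → Fin r → 𝔽) (c : Fin r → W),
      (∀ i, c i ∈ Submodule.span 𝔽 (Set.range f)) ∧
      (∀ x, f x = ∑ i, a x i • c i) := by
  set S := Submodule.span 𝔽 (Set.range f) with hS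
  haveI : FiniteDimensional 𝔽 S := FiniteDimensional.span_of_finite 𝔽 (Set.finite_range f)
  set d := Module.finrank 𝔽 S with hd
  let b : Basis (Fin d) 𝔽 S := Module.finBasis 𝔽 S
  have hfx : ∀ x, f x ∈ S := fun x => subset_span (Set.mem_range_self x)
  refine ⟨fun x i => if hi : (i : ℕ) < d then b.repr ⟨f x, hfx x⟩ ⟨i, hi⟩ else 0,
    fun i => if hi : (i : ℕ) < d then (b ⟨i, hi⟩ : W) else 0, ?_, ?_⟩
  · intro i
    by_cases hi : (i : ℕ) < d
    · simp only [dif_pos hi]; exact SetLike.coe_mem _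
    · simp only [dif_neg hi]; exact zero_mem _
  · intro x
    have key : ∀ i : Fin r,
        (if hi : (i : ℕ) < d then b.repr ⟨f x, hfx x⟩ ⟨i, hi⟩ else 0) •
          (if hi : (i : ℕ) < d then (b ⟨i, hi⟩ : W) else 0) =
        (fun j : ℕ => if hj : j < d then
            (b.repr ⟨f x, hfx x⟩ ⟨j, hj⟩) • (b ⟨j, hj⟩ : W) else 0) (i : ℕ) := by
      intro i
      by_cases hi : (i : ℕ) < d <;> simp [hi]
    calc f x = ((⟨f x, hfx x⟩ : S) : W) := rfl
      _ = ((∑ j : Fin d, b.repr ⟨f x, hfx x⟩ j • b j : S) : W) := by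
            rw [b.sum_repr ⟨f x, hfx x⟩]
      _ = ∑ j : Fin d, b.repr ⟨f x, hfx x⟩ j • (b j : W) := by
            push_cast; rfl
      _ = ∑ j ∈ Finset.range d, (fun j : ℕ => if hj : j < d then
            (b.repr ⟨f x, hfx x⟩ ⟨j, hj⟩) • (b ⟨j, hj⟩ : W) else 0) j := by
            rw [← Fin.sum_univ_eq_sum_range]
            exact Finset.sum_congr rfl fun j _ => by simp
      _ = ∑ j ∈ Finset.range r, (fun j : ℕ => if hj : j < d then
            (b.repr ⟨f x, hfx x⟩ ⟨j, hj⟩) • (b ⟨j, hj⟩ : W) else 0) j := by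
            refine Finset.sum_subset (Finset.range_subset_range.mpr h) ?_
            intro j _ hj
            rw [dif_neg (fun hlt => hj (Finset.mem_range.mpr hlt))]
      _ = ∑ i : Fin r, _ := (Fin.sum_univ_eq_sum_range _ r).symm
      _ = _ := by exact Finset.sum_congr rfl fun i _ => (key i).symm

theorem stmt_0 (𝔽 : Type*) [Field 𝔽] (m : ℕ) (hm : 0 < m)
    (M : Fin m → Fin m → Fin m → 𝔽) (r₁ r₂ : ℕ)
    (h₁ : (Matrix.of fun (x : Fin m) (yz : Fin m × Fin m) => M x yz.1 yz.2).rank ≤ r₁)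
    (h₂ : (Matrix.of fun (y : Fin m) (xz : Fin m × Fin m) => M xz.1 y xz.2).rank ≤ r₂) :
    ∃ v u w : Fin (r₁ * r₂) → Fin m → 𝔽,
      ∀ x y z, M x y z = ∑ p, v p x * u p y * w p z := by
  classical
  set f : Fin m → (Fin m × Fin m → 𝔽) := fun x yz => M x yz.1 yz.2 with hf
  set g : Fin m → (Fin m × Fin m → 𝔽) := fun y xz => M xz.1 y xz.2 with hg
  have hr1 : Module.finrank 𝔽 (Submodule.span 𝔽 (Set.range f)) ≤ r₁ := by
    rw [Matrix.rank_eq_finrank_span_row] at h₁; exact h₁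
  have hr2 : Module.finrank 𝔽 (Submodule.span 𝔽 (Set.range g)) ≤ r₂ := by
    rw [Matrix.rank_eq_finrank_span_row] at h₂; exact h₂
  obtain ⟨a, c, hcS, hfa⟩ := aux_span_decomp f r₁ hr1
  -- each `c i` is a combination of rows of `M₁`
  have hmu : ∀ i, ∃ μ : Fin m → 𝔽, ∀ yz, c i yz = ∑ x, μ x * M x yz.1 yz.2 := by
    intro i
    obtain ⟨μ, hμ⟩ := (mem_span_range_iff_exists_fun 𝔽).mp (hcS i)
    exact ⟨μ, fun yz => by rw [← hμ]; simp [hf]⟩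
  choose μ hμ using hmu
  -- for each i, decompose the slice `N i : y ↦ z ↦ c i (y,z)` with rank ≤ r₂
  have hdecomp : ∀ i : Fin r₁, ∃ (u : Fin m → Fin r₂ → 𝔽) (w : Fin r₂ → Fin m → 𝔽),
      ∀ y z, c i (y, z) = ∑ j, u y j * w j z := by
    intro i
    set N : Fin m → (Fin m → 𝔽) := fun y z => c i (y, z) with hN
    let T : (Fin m × Fin m → 𝔽) →ₗ[𝔽] (Fin m → 𝔽) :=
      { toFun := fun h z => ∑ x, μ i x * h (x, z)
        map_add' := fun h₁ h₂ => by
          funext z; simp [mul_add, Finset.sum_add_distrib]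
        map_smul' := fun s h => by
          funext z; simp [Finset.mul_sum]; congr 1; funext x; ring }
    have hTg : ∀ y, N y = T (g y) := by
      intro y; funext z; simp [hN, T, hg, hμ i (y, z)]
    have hsub : Submodule.span 𝔽 (Set.range N) ≤
        Submodule.map T (Submodule.span 𝔽 (Set.range g)) := by
      rw [Submodule.span_le]
      rintro _ ⟨y, rfl⟩
      exact ⟨g y, subset_span (Set.mem_range_self y), (hTg y).symm⟩
    have hrank : Module.finrank 𝔽 (Submodule.span 𝔽 (Set.range N)) ≤ r₂ := by
      haveI : FiniteDimensional 𝔽 (Submodule.span 𝔽 (Set.range g)) :=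
        FiniteDimensional.span_of_finite 𝔽 (Set.finite_range g)
      calc Module.finrank 𝔽 (Submodule.span 𝔽 (Set.range N))
          ≤ Module.finrank 𝔽 (Submodule.map T (Submodule.span 𝔽 (Set.range g))) :=
            Submodule.finrank_mono hsub
        _ ≤ Module.finrank 𝔽 (Submodule.span 𝔽 (Set.range g)) :=
            Submodule.finrank_map_le T _
        _ ≤ r₂ := hr2
    obtain ⟨u, w, _, huw⟩ := aux_span_decomp N r₂ hrank
    exact ⟨u, w, fun y z => by have := congrFun (huw y) z; simpa using this⟩
  choose U Wv hUW using hdecomp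
  let e : Fin r₁ × Fin r₂ ≃ Fin (r₁ * r₂) := finProdFinEquiv
  refine ⟨fun p x => a x (e.symm p).1, fun p y => U (e.symm p).1 y (e.symm p).2,
    fun p z => Wv (e.symm p).1 (e.symm p).2 z, ?_⟩
  intro x y z
  have hM : M x y z = ∑ i, a x i * c i (y, z) := by
    have := congrFun (hfa x) (y, z)
    simpa [hf] using this
  calc M x y z = ∑ i, a x i * c i (y, z) := hM
    _ = ∑ i, a x i * ∑ j, U i y j * Wv i j z := by
        refine Finset.sum_congr rfl fun i _ => by rw [hUW i y z]
    _ = ∑ q : Fin r₁ × Fin r₂, a x q.1 * U q.1 y q.2 * Wv q.1 q.2 z := by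
        rw [Fintype.sum_prod_type]
        refine Finset.sum_congr rfl fun i _ => ?_
        rw [Finset.mul_sum]
        exact Finset.sum_congr rfl fun j _ => by ring
    _ = ∑ p, a x (e.symm p).1 * U (e.symm p).1 y (e.symm p).2 * Wv (e.symm p).1 (e.symm p).2 z := by
        exact (Equiv.sum_comp e.symm fun q => a x q.1 * U q.1 y q.2 * Wv q.1 q.2 z).symm
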